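/- For the default theory with W = {a, b} and D = {(a:¬b)/¬b, (b:¬a)/¬a, (:a∧b)/(a∧b)} in Reiter default logic: ⟨D,W⟩ has the unique extension Cn({a,b}); ⟨D, W\{b}⟩ has extensions Cn({a,b}) and Cn({a,¬b}); ⟨D, W\{a}⟩ has extensions Cn({a,b}) and Cn({¬a,b}); and ⟨D, ∅⟩ has the unique extension Cn({a∧b}). Hence both clauses a and b are irredundant in {a,b} w.r.t. extension-equivalence, yet the formula {a,b} is redundant. -/

import Mathlib

/-- A propositional clause: sets of positively and negatively occurring variables. -/
structure Clause (V : Type) where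
  pos : Set V
  neg : Set V

/-- A model (set of variables assigned true) satisfies a clause. -/
def Clause.sat {V : Type} (M : Set V) (c : Clause V) : Prop :=
  (∃ x ∈ c.pos, x ∈ M) ∨ (∃ x ∈ c.neg, x ∉ M)

/-- Models of a CNF formula (set of clauses). -/
def ModOf {V : Type} (F : Set (Clause V)) : Set (Set V) :=
  {M | ∀ c ∈ F, c.sat M}

/-- Minimal models of a formula, w.r.t. set inclusion. -/
def CIRC {V : Type} (F : Set (Clause V)) : Set (Set V) :=
  {M | M ∈ ModOf F ∧ ¬ ∃ M' ∈ ModOf F, M' ⊂ M}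

/-- A default rule, represented semantically: precondition, justification and
consequence are given by their sets of models. -/
structure Default (V : Type) where
  prec : Set (Set V)
  just : Set (Set V)
  cons : Set (Set V)

/-- Models of the conjunction of the consequences of a sequence of defaults. -/
def consSet {V : Type} (p : List (Default V)) : Set (Set V) :=
  {M | ∀ d ∈ p, M ∈ d.cons}

/-- Models of the conjunction of the justifications of a sequence of defaults. -/
def justSet {V : Type} (p : List (Default V)) : Set (Set V) :=
  {M | ∀ d ∈ p, M ∈ d.just}

/-- A process of ⟨D,W⟩: a duplicate-free sequence of defaults of D such that the
precondition of each default is entailed by W together with the consequences of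
the preceding defaults. -/
def IsProcess {V : Type} (D : Set (Default V)) (W : Set (Clause V))
    (p : List (Default V)) : Prop :=
  p.Nodup ∧ (∀ d ∈ p, d ∈ D) ∧
  ∀ (i : ℕ) (h : i < p.length),
    ModOf W ∩ consSet (p.take i) ⊆ (p.get ⟨i, h⟩).prec

/-- Success: W ∪ cons(p) is consistent with the justification of each default of p. -/
def Successful {V : Type} (W : Set (Clause V)) (p : List (Default V)) : Prop :=
  ∀ d ∈ p, (ModOf W ∩ consSet p ∩ d.just).Nonempty

/-- Local applicability of a default in a process. -/
def LocallyApplicable {V : Type} (W : Set (Clause V)) (p : List (Default V))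
    (d : Default V) : Prop :=
  ModOf W ∩ consSet p ⊆ d.prec ∧ (ModOf W ∩ consSet p ∩ d.just).Nonempty

/-- Reiter semantics: selected processes. -/
def ReiterSelected {V : Type} (D : Set (Default V)) (W : Set (Clause V))
    (p : List (Default V)) : Prop :=
  IsProcess D W p ∧ Successful W p ∧
  ∀ d ∈ D, d ∉ p → ¬ LocallyApplicable W p d

/-- Extensions (as sets of models, i.e. up to logical equivalence) in Reiter semantics. -/
def ReiterExtensions {V : Type} (D : Set (Default V)) (W : Set (Clause V)) :
    Set (Set (Set V)) :=
  {E | ∃ p, ReiterSelected D W p ∧ E = ModOf W ∩ consSet p}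

/-- The default (a:¬b)/¬b; variables a = 0, b = 1 : Fin 2. -/
def d1 : Default (Fin 2) := ⟨{M | 0 ∈ M}, {M | 1 ∉ M}, {M | 1 ∉ M}⟩
/-- The default (b:¬a)/¬a. -/
def d2 : Default (Fin 2) := ⟨{M | 1 ∈ M}, {M | 0 ∉ M}, {M | 0 ∉ M}⟩
/-- The default (:a∧b)/(a∧b). -/
def d3 : Default (Fin 2) :=
  ⟨Set.univ, {M | 0 ∈ M ∧ 1 ∈ M}, {M | 0 ∈ M ∧ 1 ∈ M}⟩
/-- The unit clause a. -/
def ca : Clause (Fin 2) := ⟨{0}, ∅⟩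
/-- The unit clause b. -/
def cb : Clause (Fin 2) := ⟨{1}, ∅⟩

-- aux lemmas
lemma d1_ne_d2 : d1 ≠ d2 := by
  intro h
  have h1 : ({0} : Set (Fin 2)) ∈ d1.prec := by simp [d1]
  rw [h] at h1
  simp [d2] at h1
lemma d1_ne_d3 : d1 ≠ d3 := by
  intro h
  have h1 : (∅ : Set (Fin 2)) ∈ d3.prec := by simp [d3]
  rw [← h] at h1
  simp [d1] at h1
lemma d2_ne_d3 : d2 ≠ d3 := by
  intro h
  have h1 : (∅ : Set (Fin 2)) ∈ d3.prec := by simp [d3]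
  rw [← h] at h1
  simp [d2] at h1
lemma ca_ne_cb : ca ≠ cb := by
  intro h
  have h1 : (0 : Fin 2) ∈ ca.pos := by simp [ca]
  rw [h] at h1
  simp [cb] at h1

lemma mod_ab : ModOf ({ca, cb} : Set (Clause (Fin 2))) = {M | 0 ∈ M ∧ 1 ∈ M} := by
  ext M; simp [ModOf, Clause.sat, ca, cb]
lemma mod_a : ModOf ({ca} : Set (Clause (Fin 2))) = {M | (0 : Fin 2) ∈ M} := by
  ext M; simp [ModOf, Clause.sat, ca]
lemma mod_b : ModOf ({cb} : Set (Clause (Fin 2))) = {M | (1 : Fin 2) ∈ M} := by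
  ext M; simp [ModOf, Clause.sat, cb]
lemma mod_e : ModOf (∅ : Set (Clause (Fin 2))) = Set.univ := by
  ext M; simp [ModOf]

lemma consSet_nil {V : Type} : consSet ([] : List (Default V)) = Set.univ := by
  ext M; simp [consSet]
lemma consSet_single {V : Type} (d : Default V) : consSet [d] = d.cons := by
  ext M; simp [consSet]

lemma not_mem_take {α : Type*} {p : List α} (hn : p.Nodup) {i : ℕ} (h : i < p.length) :
    p.get ⟨i, h⟩ ∉ p.take i := by
  intro hmem
  obtain ⟨j, hget⟩ := List.mem_iff_get.mp hmem
  have hji : (j : ℕ) < i := lt_of_lt_of_le j.isLt (by simp [List.length_take])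
  have hjl : (j : ℕ) < p.length := lt_of_lt_of_le j.isLt (by simp [List.length_take])
  have heq : p.get ⟨j, hjl⟩ = p.get ⟨i, h⟩ := by
    rw [← hget]
    simp [List.get_eq_getElem, List.getElem_take]
  have := hn.get_inj_iff.mp heq
  have : (j : ℕ) = i := by simpa [Fin.ext_iff] using this
  omega

lemma eq_singleton_of {α : Type*} {p : List α} {x : α} (hn : p.Nodup)
    (hall : ∀ d ∈ p, d = x) (hx : x ∈ p) : p = [x] := by
  cases p with
  | nil => cases hx
  | cons a q =>
    have ha : a = x := hall a List.mem_cons_self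
    subst ha
    cases q with
    | nil => rfl
    | cons b r =>
      have hb : b = a := hall b (by simp)
      subst hb
      simp at hn

lemma mem_D {d : Default (Fin 2)} (h : d ∈ ({d1, d2, d3} : Set (Default (Fin 2)))) :
    d = d1 ∨ d = d2 ∨ d = d3 := by simpa using h

lemma univ_mem_mod_ab : (Set.univ : Set (Fin 2)) ∈ ModOf ({ca, cb} : Set (Clause (Fin 2))) := by
  rw [mod_ab]; simp

lemma selected_ab {p : List (Default (Fin 2))}
    (h : ReiterSelected {d1, d2, d3} ({ca, cb} : Set (Clause (Fin 2))) p) : p = [d3] := by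
  obtain ⟨⟨hnd, hmem, hprec⟩, hsucc, hclosed⟩ := h
  have hd1 : d1 ∉ p := by
    intro hd
    obtain ⟨M, hM⟩ := hsucc d1 hd
    have h1 : (1 : Fin 2) ∈ M := by
      have := hM.1.1; rw [mod_ab] at this; exact this.2
    exact hM.2 h1
  have hd2 : d2 ∉ p := by
    intro hd
    obtain ⟨M, hM⟩ := hsucc d2 hd
    have h1 : (0 : Fin 2) ∈ M := by
      have := hM.1.1; rw [mod_ab] at this; exact this.1
    exact hM.2 h1
  have hd3 : d3 ∈ p := by
    by_contra hd
    have hp : p = [] := by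
      apply List.eq_nil_iff_forall_not_mem.mpr
      intro d hdp
      rcases mem_D (hmem d hdp) with rfl | rfl | rfl
      · exact hd1 hdp
      · exact hd2 hdp
      · exact hd hdp
    subst hp
    apply hclosed d3 (by simp) (by simp)
    constructor
    · intro M _; show M ∈ d3.prec; simp [d3]
    · exact ⟨Set.univ, ⟨⟨univ_mem_mod_ab, by simp [consSet]⟩, by simp [d3]⟩⟩
  refine eq_singleton_of hnd (fun d hdp => ?_) hd3
  rcases mem_D (hmem d hdp) with rfl | rfl | rfl
  · exact absurd hdp hd1
  · exact absurd hdp hd2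
  · rfl

lemma selected_a {p : List (Default (Fin 2))}
    (h : ReiterSelected {d1, d2, d3} ({ca} : Set (Clause (Fin 2))) p) :
    p = [d1] ∨ p = [d3] := by
  obtain ⟨⟨hnd, hmem, hprec⟩, hsucc, hclosed⟩ := h
  have hd2 : d2 ∉ p := by
    intro hd
    obtain ⟨M, hM⟩ := hsucc d2 hd
    have h1 : (0 : Fin 2) ∈ M := by
      have := hM.1.1; rw [mod_a] at this; exact this
    exact hM.2 h1
  by_cases hd3 : d3 ∈ p
  · right
    have hd1 : d1 ∉ p := by
      intro hd
      obtain ⟨M, hM⟩ := hsucc d1 hd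
      have h1 : (1 : Fin 2) ∈ M := (hM.1.2 d3 hd3).2
      exact hM.2 h1
    refine eq_singleton_of hnd (fun d hdp => ?_) hd3
    rcases mem_D (hmem d hdp) with rfl | rfl | rfl
    · exact absurd hdp hd1
    · exact absurd hdp hd2
    · rfl
  · by_cases hd1 : d1 ∈ p
    · left
      refine eq_singleton_of hnd (fun d hdp => ?_) hd1
      rcases mem_D (hmem d hdp) with rfl | rfl | rfl
      · rfl
      · exact absurd hdp hd2
      · exact absurd hdp hd3
    · exfalso
      have hp : p = [] := by
        apply List.eq_nil_iff_forall_not_mem.mpr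
        intro d hdp
        rcases mem_D (hmem d hdp) with rfl | rfl | rfl
        · exact hd1 hdp
        · exact hd2 hdp
        · exact hd3 hdp
      subst hp
      apply hclosed d3 (by simp) (by simp)
      constructor
      · intro M _; show M ∈ d3.prec; simp [d3]
      · refine ⟨Set.univ, ⟨⟨?_, by simp [consSet]⟩, by simp [d3]⟩⟩
        rw [mod_a]; simp

lemma selected_b {p : List (Default (Fin 2))}
    (h : ReiterSelected {d1, d2, d3} ({cb} : Set (Clause (Fin 2))) p) :
    p = [d2] ∨ p = [d3] := by
  obtain ⟨⟨hnd, hmem, hprec⟩, hsucc, hclosed⟩ := h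
  have hd1 : d1 ∉ p := by
    intro hd
    obtain ⟨M, hM⟩ := hsucc d1 hd
    have h1 : (1 : Fin 2) ∈ M := by
      have := hM.1.1; rw [mod_b] at this; exact this
    exact hM.2 h1
  by_cases hd3 : d3 ∈ p
  · right
    have hd2 : d2 ∉ p := by
      intro hd
      obtain ⟨M, hM⟩ := hsucc d2 hd
      have h1 : (0 : Fin 2) ∈ M := (hM.1.2 d3 hd3).1
      exact hM.2 h1
    refine eq_singleton_of hnd (fun d hdp => ?_) hd3
    rcases mem_D (hmem d hdp) with rfl | rfl | rfl
    · exact absurd hdp hd1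
    · exact absurd hdp hd2
    · rfl
  · by_cases hd2 : d2 ∈ p
    · left
      refine eq_singleton_of hnd (fun d hdp => ?_) hd2
      rcases mem_D (hmem d hdp) with rfl | rfl | rfl
      · exact absurd hdp hd1
      · rfl
      · exact absurd hdp hd3
    · exfalso
      have hp : p = [] := by
        apply List.eq_nil_iff_forall_not_mem.mpr
        intro d hdp
        rcases mem_D (hmem d hdp) with rfl | rfl | rfl
        · exact hd1 hdp
        · exact hd2 hdp
        · exact hd3 hdp
      subst hp
      apply hclosed d3 (by simp) (by simp)
      constructor
      · intro M _; show M ∈ d3.prec; simp [d3]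
      · refine ⟨Set.univ, ⟨⟨?_, by simp [consSet]⟩, by simp [d3]⟩⟩
        rw [mod_b]; simp

lemma selected_e {p : List (Default (Fin 2))}
    (h : ReiterSelected {d1, d2, d3} (∅ : Set (Clause (Fin 2))) p) : p = [d3] := by
  obtain ⟨⟨hnd, hmem, hprec⟩, hsucc, hclosed⟩ := h
  have hd3 : d3 ∈ p := by
    by_contra hd3
    have hd1 : d1 ∉ p := by
      intro hd
      obtain ⟨n, hget⟩ := List.mem_iff_get.mp hd
      have hin : (∅ : Set (Fin 2)) ∈ ModOf (∅ : Set (Clause (Fin 2))) ∩ consSet (p.take n) := by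
        refine ⟨by rw [mod_e]; trivial, ?_⟩
        intro d hdp
        have hdp' : d ∈ p := List.mem_of_mem_take hdp
        rcases mem_D (hmem d hdp') with rfl | rfl | rfl
        · exact absurd (hget ▸ hdp) (not_mem_take hnd n.isLt)
        · simp [d2]
        · exact absurd hdp' hd3
      have hpre := hprec n n.isLt hin
      rw [Fin.eta, hget] at hpre
      simp [d1] at hpre
    have hd2 : d2 ∉ p := by
      intro hd
      obtain ⟨n, hget⟩ := List.mem_iff_get.mp hd
      have hin : (∅ : Set (Fin 2)) ∈ ModOf (∅ : Set (Clause (Fin 2))) ∩ consSet (p.take n) := by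
        refine ⟨by rw [mod_e]; trivial, ?_⟩
        intro d hdp
        have hdp' : d ∈ p := List.mem_of_mem_take hdp
        rcases mem_D (hmem d hdp') with rfl | rfl | rfl
        · simp [d1]
        · exact absurd (hget ▸ hdp) (not_mem_take hnd n.isLt)
        · exact absurd hdp' hd3
      have hpre := hprec n n.isLt hin
      rw [Fin.eta, hget] at hpre
      simp [d2] at hpre
    have hp : p = [] := by
      apply List.eq_nil_iff_forall_not_mem.mpr
      intro d hdp
      rcases mem_D (hmem d hdp) with rfl | rfl | rfl
      · exact hd1 hdp
      · exact hd2 hdp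
      · exact hd3 hdp
    subst hp
    apply hclosed d3 (by simp) (by simp)
    constructor
    · intro M _; show M ∈ d3.prec; simp [d3]
    · exact ⟨Set.univ, ⟨⟨by rw [mod_e]; trivial, by simp [consSet]⟩, by simp [d3]⟩⟩
  have hd1 : d1 ∉ p := by
    intro hd
    obtain ⟨M, hM⟩ := hsucc d1 hd
    exact hM.2 (hM.1.2 d3 hd3).2
  have hd2 : d2 ∉ p := by
    intro hd
    obtain ⟨M, hM⟩ := hsucc d2 hd
    exact hM.2 (hM.1.2 d3 hd3).1
  refine eq_singleton_of hnd (fun d hdp => ?_) hd3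
  rcases mem_D (hmem d hdp) with rfl | rfl | rfl
  · exact absurd hdp hd1
  · exact absurd hdp hd2
  · rfl

lemma proc_single {W : Set (Clause (Fin 2))} {d : Default (Fin 2)}
    (hd : d ∈ ({d1, d2, d3} : Set (Default (Fin 2)))) (hp : ModOf W ⊆ d.prec) :
    IsProcess {d1, d2, d3} W [d] := by
  refine ⟨by simp, by simpa using hd, ?_⟩
  intro i hi
  simp only [List.length_singleton] at hi
  interval_cases i
  exact fun M hM => hp hM.1

lemma sel_ab : ReiterSelected {d1, d2, d3} ({ca, cb} : Set (Clause (Fin 2))) [d3] := by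
  refine ⟨proc_single (by simp) (fun M _ => by simp [d3]), ?_, ?_⟩
  · intro d hd
    simp only [List.mem_singleton] at hd
    subst hd
    exact ⟨Set.univ, ⟨⟨univ_mem_mod_ab, by simp [consSet, d3]⟩, by simp [d3]⟩⟩
  · intro d hd hdp hap
    obtain ⟨M, hM⟩ := hap.2
    rcases mem_D hd with rfl | rfl | rfl
    · have h1 : (1 : Fin 2) ∈ M := by
        have := hM.1.1; rw [mod_ab] at this; exact this.2
      exact hM.2 h1
    · have h1 : (0 : Fin 2) ∈ M := by
        have := hM.1.1; rw [mod_ab] at this; exact this.1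
      exact hM.2 h1
    · simp at hdp

lemma sel_a3 : ReiterSelected {d1, d2, d3} ({ca} : Set (Clause (Fin 2))) [d3] := by
  refine ⟨proc_single (by simp) (fun M _ => by simp [d3]), ?_, ?_⟩
  · intro d hd
    simp only [List.mem_singleton] at hd
    subst hd
    exact ⟨Set.univ, ⟨⟨by rw [mod_a]; simp, by simp [consSet, d3]⟩, by simp [d3]⟩⟩
  · intro d hd hdp hap
    obtain ⟨M, hM⟩ := hap.2
    rcases mem_D hd with rfl | rfl | rfl
    · have h1 : (1 : Fin 2) ∈ M := (hM.1.2 d3 (by simp)).2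
      exact hM.2 h1
    · have h1 : (0 : Fin 2) ∈ M := by
        have := hM.1.1; rw [mod_a] at this; exact this
      exact hM.2 h1
    · simp at hdp

lemma sel_a1 : ReiterSelected {d1, d2, d3} ({ca} : Set (Clause (Fin 2))) [d1] := by
  refine ⟨proc_single (by simp) (fun M hM => by rw [mod_a] at hM; exact hM), ?_, ?_⟩
  · intro d hd
    simp only [List.mem_singleton] at hd
    subst hd
    refine ⟨{0}, ⟨⟨by rw [mod_a]; simp, ?_⟩, ?_⟩⟩
    · intro d hdp
      simp only [List.mem_singleton] at hdp
      subst hdp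
      simp [d1]
    · simp [d1]
  · intro d hd hdp hap
    rcases mem_D hd with rfl | rfl | rfl
    · simp at hdp
    · have h1 : ({0} : Set (Fin 2)) ∈ ModOf ({ca} : Set (Clause (Fin 2))) ∩ consSet [d1] := by
        refine ⟨by rw [mod_a]; simp, ?_⟩
        intro d hdp'
        simp only [List.mem_singleton] at hdp'
        subst hdp'
        simp [d1]
      have := hap.1 h1
      simp [d2] at this
    · obtain ⟨M, hM⟩ := hap.2
      have h1 : (1 : Fin 2) ∉ M := hM.1.2 d1 (by simp)
      exact h1 hM.2.2

lemma sel_b3 : ReiterSelected {d1, d2, d3} ({cb} : Set (Clause (Fin 2))) [d3] := by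
  refine ⟨proc_single (by simp) (fun M _ => by simp [d3]), ?_, ?_⟩
  · intro d hd
    simp only [List.mem_singleton] at hd
    subst hd
    exact ⟨Set.univ, ⟨⟨by rw [mod_b]; simp, by simp [consSet, d3]⟩, by simp [d3]⟩⟩
  · intro d hd hdp hap
    obtain ⟨M, hM⟩ := hap.2
    rcases mem_D hd with rfl | rfl | rfl
    · have h1 : (1 : Fin 2) ∈ M := by
        have := hM.1.1; rw [mod_b] at this; exact this
      exact hM.2 h1
    · have h1 : (0 : Fin 2) ∈ M := (hM.1.2 d3 (by simp)).1
      exact hM.2 h1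
    · simp at hdp

lemma sel_b2 : ReiterSelected {d1, d2, d3} ({cb} : Set (Clause (Fin 2))) [d2] := by
  refine ⟨proc_single (by simp) (fun M hM => by rw [mod_b] at hM; exact hM), ?_, ?_⟩
  · intro d hd
    simp only [List.mem_singleton] at hd
    subst hd
    refine ⟨{1}, ⟨⟨by rw [mod_b]; simp, ?_⟩, ?_⟩⟩
    · intro d hdp
      simp only [List.mem_singleton] at hdp
      subst hdp
      simp [d2]
    · simp [d2]
  · intro d hd hdp hap
    rcases mem_D hd with rfl | rfl | rfl
    · have h1 : ({1} : Set (Fin 2)) ∈ ModOf ({cb} : Set (Clause (Fin 2))) ∩ consSet [d2] := by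
        refine ⟨by rw [mod_b]; simp, ?_⟩
        intro d hdp'
        simp only [List.mem_singleton] at hdp'
        subst hdp'
        simp [d2]
      have := hap.1 h1
      simp [d1] at this
    · simp at hdp
    · obtain ⟨M, hM⟩ := hap.2
      have h1 : (0 : Fin 2) ∉ M := hM.1.2 d2 (by simp)
      exact h1 hM.2.1

lemma sel_e : ReiterSelected {d1, d2, d3} (∅ : Set (Clause (Fin 2))) [d3] := by
  refine ⟨proc_single (by simp) (fun M _ => by simp [d3]), ?_, ?_⟩
  · intro d hd
    simp only [List.mem_singleton] at hd
    subst hd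
    exact ⟨Set.univ, ⟨⟨by rw [mod_e]; trivial, by simp [consSet, d3]⟩, by simp [d3]⟩⟩
  · intro d hd hdp hap
    obtain ⟨M, hM⟩ := hap.2
    rcases mem_D hd with rfl | rfl | rfl
    · have h1 : (1 : Fin 2) ∈ M := (hM.1.2 d3 (by simp)).2
      exact hM.2 h1
    · have h1 : (0 : Fin 2) ∈ M := (hM.1.2 d3 (by simp)).1
      exact hM.2 h1
    · simp at hdp


lemma Eab : ModOf ({ca, cb} : Set (Clause (Fin 2))) ∩ consSet [d3]
    = {M | 0 ∈ M ∧ 1 ∈ M} := by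
  ext M; rw [mod_ab, consSet_single]; simp [d3]
lemma Ea3 : ModOf ({ca} : Set (Clause (Fin 2))) ∩ consSet [d3]
    = {M | 0 ∈ M ∧ 1 ∈ M} := by
  ext M; rw [mod_a, consSet_single]; simp [d3]
lemma Ea1 : ModOf ({ca} : Set (Clause (Fin 2))) ∩ consSet [d1]
    = {M | 0 ∈ M ∧ 1 ∉ M} := by
  ext M; rw [mod_a, consSet_single]; simp [d1]
lemma Eb3 : ModOf ({cb} : Set (Clause (Fin 2))) ∩ consSet [d3]
    = {M | 0 ∈ M ∧ 1 ∈ M} := by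
  ext M; rw [mod_b, consSet_single]; simp [d3]
lemma Eb2 : ModOf ({cb} : Set (Clause (Fin 2))) ∩ consSet [d2]
    = {M | 0 ∉ M ∧ 1 ∈ M} := by
  ext M; rw [mod_b, consSet_single]; simp [d2]; tauto
lemma Ee : ModOf (∅ : Set (Clause (Fin 2))) ∩ consSet [d3]
    = {M | 0 ∈ M ∧ 1 ∈ M} := by
  ext M; rw [mod_e, consSet_single]; simp [d3]

lemma ext_ab : ReiterExtensions {d1, d2, d3} ({ca, cb} : Set (Clause (Fin 2)))
    = { {M | 0 ∈ M ∧ 1 ∈ M} } := by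
  ext E
  simp only [ReiterExtensions, Set.mem_setOf_eq, Set.mem_singleton_iff]
  constructor
  · rintro ⟨p, hsel, rfl⟩
    rw [selected_ab hsel, Eab]
  · rintro rfl
    exact ⟨[d3], sel_ab, Eab.symm⟩

lemma ext_a : ReiterExtensions {d1, d2, d3} ({ca} : Set (Clause (Fin 2)))
    = { {M | 0 ∈ M ∧ 1 ∈ M}, {M | 0 ∈ M ∧ 1 ∉ M} } := by
  ext E
  simp only [ReiterExtensions, Set.mem_setOf_eq, Set.mem_insert_iff,
    Set.mem_singleton_iff]
  constructor
  · rintro ⟨p, hsel, rfl⟩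
    rcases selected_a hsel with rfl | rfl
    · right; rw [Ea1]
    · left; rw [Ea3]
  · rintro (rfl | rfl)
    · exact ⟨[d3], sel_a3, Ea3.symm⟩
    · exact ⟨[d1], sel_a1, Ea1.symm⟩

lemma ext_b : ReiterExtensions {d1, d2, d3} ({cb} : Set (Clause (Fin 2)))
    = { {M | 0 ∈ M ∧ 1 ∈ M}, {M | 0 ∉ M ∧ 1 ∈ M} } := by
  ext E
  simp only [ReiterExtensions, Set.mem_setOf_eq, Set.mem_insert_iff,
    Set.mem_singleton_iff]
  constructor
  · rintro ⟨p, hsel, rfl⟩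
    rcases selected_b hsel with rfl | rfl
    · right; rw [Eb2]
    · left; rw [Eb3]
  · rintro (rfl | rfl)
    · exact ⟨[d3], sel_b3, Eb3.symm⟩
    · exact ⟨[d2], sel_b2, Eb2.symm⟩

lemma ext_e : ReiterExtensions {d1, d2, d3} (∅ : Set (Clause (Fin 2)))
    = { {M | 0 ∈ M ∧ 1 ∈ M} } := by
  ext E
  simp only [ReiterExtensions, Set.mem_setOf_eq, Set.mem_singleton_iff]
  constructor
  · rintro ⟨p, hsel, rfl⟩
    rw [selected_e hsel, Ee]
  · rintro rfl
    exact ⟨[d3], sel_e, Ee.symm⟩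

lemma diff_ca : (({ca, cb} : Set (Clause (Fin 2))) \ {ca}) = {cb} := by
  ext c
  simp only [Set.mem_diff, Set.mem_insert_iff, Set.mem_singleton_iff]
  constructor
  · rintro ⟨rfl | rfl, hne⟩
    · exact absurd rfl hne
    · rfl
  · rintro rfl
    exact ⟨Or.inr rfl, fun h => ca_ne_cb h.symm⟩

lemma diff_cb : (({ca, cb} : Set (Clause (Fin 2))) \ {cb}) = {ca} := by
  ext c
  simp only [Set.mem_diff, Set.mem_insert_iff, Set.mem_singleton_iff]
  constructor
  · rintro ⟨rfl | rfl, hne⟩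
    · rfl
    · exact absurd rfl hne
  · rintro rfl
    exact ⟨Or.inl rfl, ca_ne_cb⟩


/-- Both clauses of W = {a,b} are irredundant but W itself is redundant:
default logic lacks the local redundancy property. -/
theorem no_local_redundancy :
    ReiterExtensions {d1, d2, d3} ({ca, cb} : Set (Clause (Fin 2)))
      = { {M | 0 ∈ M ∧ 1 ∈ M} } ∧
    ReiterExtensions {d1, d2, d3} ({ca} : Set (Clause (Fin 2)))
      = { {M | 0 ∈ M ∧ 1 ∈ M}, {M | 0 ∈ M ∧ 1 ∉ M} } ∧
    ReiterExtensions {d1, d2, d3} ({cb} : Set (Clause (Fin 2)))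
      = { {M | 0 ∈ M ∧ 1 ∈ M}, {M | 0 ∉ M ∧ 1 ∈ M} } ∧
    ReiterExtensions {d1, d2, d3} (∅ : Set (Clause (Fin 2)))
      = { {M | 0 ∈ M ∧ 1 ∈ M} } ∧
    (∀ γ ∈ ({ca, cb} : Set (Clause (Fin 2))),
      ReiterExtensions {d1, d2, d3} (({ca, cb} : Set (Clause (Fin 2))) \ {γ})
        ≠ ReiterExtensions {d1, d2, d3} ({ca, cb} : Set (Clause (Fin 2)))) ∧
    (∃ W' ⊂ ({ca, cb} : Set (Clause (Fin 2))),
      ReiterExtensions {d1, d2, d3} W'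
        = ReiterExtensions {d1, d2, d3} ({ca, cb} : Set (Clause (Fin 2)))) := by
  refine ⟨ext_ab, ext_a, ext_b, ext_e, ?_, ⟨∅, Set.empty_ssubset.mpr ⟨ca, by simp⟩,
    by rw [ext_e, ext_ab]⟩⟩
  intro γ hγ
  rcases hγ with rfl | hγ
  · rw [diff_ca, ext_b, ext_ab]
    intro h
    have h2 : ({M | 0 ∉ M ∧ 1 ∈ M} : Set (Set (Fin 2))) ∈
        ({ {M | 0 ∈ M ∧ 1 ∈ M} } : Set (Set (Set (Fin 2)))) := h ▸ (by simp)
    rw [Set.mem_singleton_iff] at h2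
    have h3 := Set.ext_iff.mp h2 Set.univ
    simp at h3
  · rw [Set.mem_singleton_iff] at hγ
    subst hγ
    rw [diff_cb, ext_a, ext_ab]
    intro h
    have h2 : ({M | 0 ∈ M ∧ 1 ∉ M} : Set (Set (Fin 2))) ∈
        ({ {M | 0 ∈ M ∧ 1 ∈ M} } : Set (Set (Set (Fin 2)))) := h ▸ (by simp)
    rw [Set.mem_singleton_iff] at h2
    have h3 := Set.ext_iff.mp h2 Set.univ
    simp at h3
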